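/- arXiv:1107.2248 — 2 statements merged into one kernel-verified Lean document; each statement's English description precedes it below -/
import Mathlib

section
/- Any ρ-approximate pure Nash equilibrium of a Ψ-game of degree d is a (d!·ρ)-approximate pure Nash equilibrium of the corresponding weighted congestion game with polynomial latency functions of maximum degree d. -/
open Finset

variable {n : ℕ} {E : Type*} [Fintype E] [DecidableEq E]

/-- `PsiW w k P = k! ·` (sum of all monomials of total degree `k` in the
weights of the players in `P`). -/
noncomputable def PsiW (w : Fin n → ℝ) (k : ℕ) (P : Finset (Fin n)) : ℝ :=
  (Nat.factorial k : ℝ) * ∑ m ∈ P.sym k, ((m : Multiset (Fin n)).map w).prod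

/-- A weighted congestion game with `n` players, resources `E`, and polynomial
latency functions of maximum degree `d` with non-negative coefficients
`a e k` (for `k ≤ d`). The same data also describes the corresponding Ψ-game. -/
structure WCGame (n : ℕ) (E : Type*) [Fintype E] (d : ℕ) where
  /-- weights of the players -/
  w : Fin n → ℝ
  w_pos : ∀ u, 0 < w u
  /-- strategy sets: nonempty collections of nonempty sets of resources -/
  strat : Fin n → Finset (Finset E)
  strat_ne : ∀ u, (strat u).Nonempty
  strat_mem_ne : ∀ u, ∀ s ∈ strat u, s.Nonempty
  /-- coefficients of the latency functions -/
  a : E → ℕ → ℝ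
  a_nonneg : ∀ e k, 0 ≤ a e k

namespace WCGame

variable {d : ℕ} (G : WCGame n E d)

/-- A state assigns a strategy to every player. -/
def IsState (S : Fin n → Finset E) : Prop := ∀ u, S u ∈ G.strat u

/-- The set of players using resource `e` in state `S`. -/
def users (S : Fin n → Finset E) (e : E) : Finset (Fin n) :=
  univ.filter fun u => e ∈ S u

/-- The cost of player `u` in the weighted congestion game. -/
noncomputable def cost (S : Fin n → Finset E) (u : Fin n) : ℝ :=
  G.w u * ∑ e ∈ S u, ∑ k ∈ Finset.range (d + 1),
    G.a e k * ((users S e).sum G.w) ^ k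

/-- The cost of player `u` in the corresponding Ψ-game. -/
noncomputable def pcost (S : Fin n → Finset E) (u : Fin n) : ℝ :=
  G.w u * ∑ e ∈ S u, ∑ k ∈ Finset.range (d + 1),
    G.a e k * PsiW G.w k (users S e)

/-- The potential of the subgame induced by the players in `C`. -/
noncomputable def potOn (C : Finset (Fin n)) (S : Fin n → Finset E) : ℝ :=
  ∑ e : E, ∑ k ∈ Finset.range (d + 1),
    G.a e k / (k + 1) * PsiW G.w (k + 1) (users S e ∩ C)

/-- The potential function of the Ψ-game. -/
noncomputable def pot (S : Fin n → Finset E) : ℝ := G.potOn univ S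

end WCGame


open Finset

lemma multiset_multinomial_le_card_factorial {α : Type*} [DecidableEq α] (m : Multiset α) :
    m.countPerms ≤ (Multiset.card m).factorial := by
  have h : (m.toFinsupp.sum fun _ => id) = Multiset.card m := by
    rw [← Finsupp.card_toMultiset, Multiset.toFinsupp_toMultiset]
  rw [Multiset.countPerms, Finsupp.multinomial, h]
  exact Nat.div_le_self _ _

lemma psi_lower {n : ℕ} (w : Fin n → ℝ) (hw : ∀ u, 0 ≤ w u) (k : ℕ) (P : Finset (Fin n)) :
    (∑ u ∈ P, w u) ^ k ≤ PsiW w k P := by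
  rw [Finset.sum_pow, PsiW, Finset.mul_sum]
  refine Finset.sum_le_sum fun m _ => ?_
  have hp : 0 ≤ ((m : Multiset (Fin n)).map w).prod := by
    apply Multiset.prod_nonneg
    intro x hx
    obtain ⟨y, -, rfl⟩ := Multiset.mem_map.1 hx
    exact hw y
  have hc : Multiset.card (m : Multiset (Fin n)) = k := m.2
  have : ((m : Multiset (Fin n)).countPerms : ℝ) ≤ (Nat.factorial k : ℝ) := by
    exact_mod_cast hc ▸ multiset_multinomial_le_card_factorial (m : Multiset (Fin n))
  exact mul_le_mul_of_nonneg_right this hp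

lemma psi_upper {n : ℕ} (w : Fin n → ℝ) (hw : ∀ u, 0 ≤ w u) (k : ℕ) (P : Finset (Fin n)) :
    PsiW w k P ≤ (Nat.factorial k : ℝ) * (∑ u ∈ P, w u) ^ k := by
  rw [Finset.sum_pow, PsiW, Finset.mul_sum, Finset.mul_sum]
  refine Finset.sum_le_sum fun m _ => ?_
  have hp : 0 ≤ ((m : Multiset (Fin n)).map w).prod := by
    apply Multiset.prod_nonneg
    intro x hx
    obtain ⟨y, -, rfl⟩ := Multiset.mem_map.1 hx
    exact hw y
  have h1 : (1 : ℝ) ≤ ((m : Multiset (Fin n)).countPerms : ℝ) := by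
    exact_mod_cast Nat.one_le_iff_ne_zero.2 (Nat.multinomial_pos _ _).ne'
  calc (Nat.factorial k : ℝ) * ((m : Multiset (Fin n)).map w).prod
      = (Nat.factorial k : ℝ) * (1 * ((m : Multiset (Fin n)).map w).prod) := by ring
    _ ≤ (Nat.factorial k : ℝ) * (((m : Multiset (Fin n)).countPerms : ℝ)
          * ((m : Multiset (Fin n)).map w).prod) := by
        apply mul_le_mul_of_nonneg_left (mul_le_mul_of_nonneg_right h1 hp)
        positivity
    _ = _ := rfl


theorem stmt13 {n : ℕ} {E : Type*} [Fintype E] [DecidableEq E] {d : ℕ}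
    (G : WCGame n E d) (ρ : ℝ) (hρ : 1 ≤ ρ)
    (S : Fin n → Finset E) (hS : G.IsState S)
    (heq : ∀ u : Fin n, ∀ s' ∈ G.strat u,
      G.pcost S u ≤ ρ * G.pcost (Function.update S u s') u) :
    ∀ u : Fin n, ∀ s' ∈ G.strat u,
      G.cost S u ≤ (Nat.factorial d : ℝ) * ρ * G.cost (Function.update S u s') u := by
  intro u s' hs'
  have hw : ∀ v, 0 ≤ G.w v := fun v => (G.w_pos v).le
  have h1 : G.cost S u ≤ G.pcost S u := by
    unfold WCGame.cost WCGame.pcost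
    refine mul_le_mul_of_nonneg_left ?_ (hw u)
    refine Finset.sum_le_sum fun e _ => Finset.sum_le_sum fun k _ => ?_
    exact mul_le_mul_of_nonneg_left (psi_lower _ hw _ _) (G.a_nonneg e k)
  have h2 : G.pcost (Function.update S u s') u
      ≤ (Nat.factorial d : ℝ) * G.cost (Function.update S u s') u := by
    unfold WCGame.cost WCGame.pcost
    rw [Finset.mul_sum]
    simp_rw [Finset.mul_sum]
    refine Finset.sum_le_sum fun e _ => Finset.sum_le_sum fun k hk => ?_
    have hkd : k ≤ d := Nat.lt_succ_iff.1 (Finset.mem_range.1 hk)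
    have hpow : (0:ℝ) ≤ ((WCGame.users (Function.update S u s') e).sum G.w) ^ k :=
      pow_nonneg (Finset.sum_nonneg fun v _ => hw v) k
    calc G.w u * (G.a e k * PsiW G.w k (WCGame.users (Function.update S u s') e))
        ≤ G.w u * (G.a e k * ((Nat.factorial k : ℝ)
            * ((WCGame.users (Function.update S u s') e).sum G.w) ^ k)) := by
          refine mul_le_mul_of_nonneg_left (mul_le_mul_of_nonneg_left ?_ (G.a_nonneg e k)) (hw u)
          exact psi_upper _ hw _ _
      _ ≤ G.w u * (G.a e k * ((Nat.factorial d : ℝ)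
            * ((WCGame.users (Function.update S u s') e).sum G.w) ^ k)) := by
          refine mul_le_mul_of_nonneg_left (mul_le_mul_of_nonneg_left ?_ (G.a_nonneg e k)) (hw u)
          exact mul_le_mul_of_nonneg_right
            (by exact_mod_cast Nat.factorial_le hkd) hpow
      _ = (Nat.factorial d : ℝ)
            * (G.w u * (G.a e k * ((WCGame.users (Function.update S u s') e).sum G.w) ^ k)) := by
          ring
  calc G.cost S u ≤ G.pcost S u := h1
    _ ≤ ρ * G.pcost (Function.update S u s') u := heq u s' hs'
    _ ≤ ρ * ((Nat.factorial d : ℝ) * G.cost (Function.update S u s') u) :=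
        mul_le_mul_of_nonneg_left h2 (by linarith)
    _ = (Nat.factorial d : ℝ) * ρ * G.cost (Function.update S u s') u := by ring
end

section
/- For every state S of a Ψ-game of degree d and any set of players A ⊆ N, the A-partial potential is bounded by the total cost of players in A: Φ(S) − Φ^{N∖A}(S) ≤ Σ_{u∈A} ĉ_u(S). -/
open Finset

variable {n : ℕ} {E : Type*} [Fintype E] [DecidableEq E]

section Aux

variable {w : Fin n → ℝ}

lemma psiW_nonneg (hw : ∀ u, 0 ≤ w u) (k : ℕ) (P : Finset (Fin n)) :
    0 ≤ PsiW w k P := by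
  apply mul_nonneg (by positivity)
  refine Finset.sum_nonneg fun m _ => Multiset.prod_nonneg ?_
  intro x hx
  obtain ⟨a, -, rfl⟩ := Multiset.mem_map.1 hx
  exact hw a

lemma psiW_mono (hw : ∀ u, 0 ≤ w u) (k : ℕ) {P Q : Finset (Fin n)}
    (h : P ⊆ Q) : PsiW w k P ≤ PsiW w k Q := by
  apply mul_le_mul_of_nonneg_left _ (by positivity)
  refine Finset.sum_le_sum_of_subset_of_nonneg (Finset.sym_mono h k) ?_
  intro m _ _
  refine Multiset.prod_nonneg fun x hx => ?_
  obtain ⟨a, -, rfl⟩ := Multiset.mem_map.1 hx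
  exact hw a

lemma sum_sym_insert (u : Fin n) (P : Finset (Fin n)) (hu : u ∉ P) (k : ℕ) :
    ∑ m ∈ (insert u P).sym (k + 1), ((m : Multiset (Fin n)).map w).prod
      = ∑ m ∈ P.sym (k + 1), ((m : Multiset (Fin n)).map w).prod
        + w u * ∑ m ∈ (insert u P).sym k, ((m : Multiset (Fin n)).map w).prod := by
  classical
  rw [← Finset.sum_filter_add_sum_filter_not ((insert u P).sym (k + 1))
    (fun m => u ∈ m)]
  have h1 : ((insert u P).sym (k + 1)).filter (fun m => ¬ u ∈ m) = P.sym (k + 1) := by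
    ext m
    simp only [Finset.mem_filter, Finset.mem_sym_iff, Finset.mem_insert]
    constructor
    · rintro ⟨h, hm⟩ a ha
      rcases h a ha with rfl | h
      · exact absurd ha hm
      · exact h
    · intro h
      exact ⟨fun a ha => Or.inr (h a ha), fun hm => hu (h u hm)⟩
  have h2 : ((insert u P).sym (k + 1)).filter (fun m => u ∈ m)
      = ((insert u P).sym k).image (Sym.cons u) := by
    ext m
    simp only [Finset.mem_filter, Finset.mem_image, Finset.mem_sym_iff]
    constructor
    · rintro ⟨h, hm⟩
      refine ⟨m.erase u hm, fun a ha => h a (Multiset.mem_of_mem_erase (b := u) ?_), Sym.cons_erase hm⟩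
      exact Sym.coe_erase hm ▸ (Sym.mem_coe.2 ha)
    · rintro ⟨m', h', rfl⟩
      exact ⟨fun a ha => (Sym.mem_cons.1 ha).elim
        (fun heq => heq ▸ Finset.mem_insert_self u P) (h' a), Sym.mem_cons_self u m'⟩
  rw [h1, h2, Finset.sum_image (fun x _ y _ h => (Sym.cons_inj_right u x y).1 h)]
  have : ∀ m' : Sym (Fin n) k,
      (((u ::ₛ m' : Sym (Fin n) (k + 1)) : Multiset (Fin n)).map w).prod
        = w u * ((m' : Multiset (Fin n)).map w).prod := by
    intro m'
    rw [Sym.coe_cons, Multiset.map_cons, Multiset.prod_cons]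
  rw [add_comm]
  congr 1
  rw [Finset.mul_sum]
  exact Finset.sum_congr rfl fun m' _ => this m'

lemma psiW_insert (u : Fin n) (P : Finset (Fin n)) (hu : u ∉ P) (k : ℕ) :
    PsiW w (k + 1) (insert u P)
      = PsiW w (k + 1) P + (k + 1) * w u * PsiW w k (insert u P) := by
  unfold PsiW
  rw [sum_sym_insert u P hu k, Nat.factorial_succ]
  push_cast
  ring

end Aux

namespace WCGame

variable {d : ℕ} (G : WCGame n E d)

lemma w_nonneg : ∀ u, 0 ≤ G.w u := fun u => (G.w_pos u).le

lemma pot_step (S : Fin n → Finset E) (C : Finset (Fin n)) (u : Fin n)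
    (hu : u ∉ C) :
    G.potOn (insert u C) S ≤ G.potOn C S + G.pcost S u := by
  unfold potOn pcost
  rw [Finset.mul_sum]
  rw [← Finset.sum_filter_add_sum_filter_not Finset.univ (fun e => e ∈ S u)
    (fun e => ∑ k ∈ Finset.range (d + 1),
      G.a e k / (k + 1) * PsiW G.w (k + 1) (users S e ∩ insert u C))]
  rw [← Finset.sum_filter_add_sum_filter_not Finset.univ (fun e => e ∈ S u)
    (fun e => ∑ k ∈ Finset.range (d + 1),
      G.a e k / (k + 1) * PsiW G.w (k + 1) (users S e ∩ C))]
  rw [show Finset.univ.filter (fun e => e ∈ S u) = S u from by ext e; simp]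
  have part1 : ∑ e ∈ S u,
      ∑ k ∈ Finset.range (d + 1),
        G.a e k / (k + 1) * PsiW G.w (k + 1) (users S e ∩ insert u C)
      ≤ ∑ e ∈ S u,
          ∑ k ∈ Finset.range (d + 1),
            G.a e k / (k + 1) * PsiW G.w (k + 1) (users S e ∩ C)
        + ∑ e ∈ S u,
            G.w u * ∑ k ∈ Finset.range (d + 1),
              G.a e k * PsiW G.w k (users S e) := by
    rw [← Finset.sum_add_distrib]
    refine Finset.sum_le_sum fun e he => ?_
    have hemem : e ∈ S u := by simpa using he
    rw [Finset.mul_sum, ← Finset.sum_add_distrib]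
    refine Finset.sum_le_sum fun k _ => ?_
    have huu : u ∈ users S e := by simp [users, hemem]
    have hins : users S e ∩ insert u C = insert u (users S e ∩ C) := by
      rw [Finset.insert_inter_distrib, Finset.insert_eq_self.2 huu]
    have hunC : u ∉ users S e ∩ C := fun h => hu (Finset.mem_inter.1 h).2
    rw [hins, psiW_insert u _ hunC k]
    have hsub : insert u (users S e ∩ C) ⊆ users S e := by
      intro x hx
      rcases Finset.mem_insert.1 hx with rfl | hx
      · exact huu
      · exact (Finset.mem_inter.1 hx).1
    have hmono := psiW_mono (w := G.w) G.w_nonneg k hsub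
    have hnn := psiW_nonneg (w := G.w) G.w_nonneg k (insert u (users S e ∩ C))
    have hk1 : (0:ℝ) < (k:ℝ) + 1 := by positivity
    have ha := G.a_nonneg e k
    have hw := (G.w_pos u).le
    rw [mul_add]
    have hle : G.a e k / (↑k + 1) * ((↑k + 1) * G.w u * PsiW G.w k (insert u (users S e ∩ C)))
        ≤ G.w u * (G.a e k * PsiW G.w k (users S e)) := by
      have heq : G.a e k / (↑k + 1) * ((↑k + 1) * G.w u * PsiW G.w k (insert u (users S e ∩ C)))
          = G.w u * (G.a e k * PsiW G.w k (insert u (users S e ∩ C))) := by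
        field_simp
      rw [heq]
      apply mul_le_mul_of_nonneg_left _ hw
      exact mul_le_mul_of_nonneg_left hmono ha
    linarith
  refine le_trans (add_le_add part1 (le_of_eq
    (Finset.sum_congr rfl fun e he => ?_))) (by linarith)
  have hne : ¬ e ∈ S u := by simpa using (Finset.mem_filter.1 he).2
  have hnu : u ∉ users S e := by simp [users, hne]
  have hins : users S e ∩ insert u C = users S e ∩ C := by
    rw [Finset.insert_eq, Finset.inter_union_distrib_left]
    simp [Finset.inter_singleton_of_notMem hnu]
  rw [hins]


lemma pcost_nonneg (S : Fin n → Finset E) (u : Fin n) : 0 ≤ G.pcost S u := by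
  unfold pcost
  apply mul_nonneg (G.w_pos u).le
  refine Finset.sum_nonneg fun e _ => Finset.sum_nonneg fun k _ => ?_
  exact mul_nonneg (G.a_nonneg e k) (psiW_nonneg G.w_nonneg k _)

lemma pot_union (S : Fin n → Finset E) (A : Finset (Fin n)) :
    ∀ C : Finset (Fin n), Disjoint A C →
      G.potOn (C ∪ A) S ≤ G.potOn C S + ∑ u ∈ A, G.pcost S u := by
  classical
  induction A using Finset.induction_on with
  | empty => intro C _; simp
  | @insert a A' ha ih =>
    intro C hdisj
    have haC : a ∉ C := Finset.disjoint_left.1 hdisj (Finset.mem_insert_self a A')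
    have haCA : a ∉ C ∪ A' := by
      simp only [Finset.mem_union, not_or]; exact ⟨haC, ha⟩
    have h1 : C ∪ insert a A' = insert a (C ∪ A') := by
      ext x; simp [or_comm, or_left_comm, or_assoc]
    rw [h1, Finset.sum_insert ha]
    calc G.potOn (insert a (C ∪ A')) S
        ≤ G.potOn (C ∪ A') S + G.pcost S a := G.pot_step S (C ∪ A') a haCA
      _ ≤ (G.potOn C S + ∑ u ∈ A', G.pcost S u) + G.pcost S a := by
          have := ih C (Finset.disjoint_insert_left.1 hdisj).2
          linarith
      _ = G.potOn C S + (G.pcost S a + ∑ u ∈ A', G.pcost S u) := by ring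

end WCGame

theorem stmt17 {n : ℕ} {E : Type*} [Fintype E] [DecidableEq E] {d : ℕ}
    (G : WCGame n E d) (S : Fin n → Finset E) (hS : G.IsState S)
    (A : Finset (Fin n)) :
    G.pot S - G.potOn (Finset.univ \ A) S ≤ ∑ u ∈ A, G.pcost S u := by
  have hdisj : Disjoint A (Finset.univ \ A) := by
    simp [Finset.disjoint_sdiff]
  have hunion : (Finset.univ \ A) ∪ A = Finset.univ := by
    simp [Finset.sdiff_union_self_eq_union]
  have := G.pot_union S A (Finset.univ \ A) hdisj
  rw [hunion] at this
  unfold WCGame.pot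
  linarith
end
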